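/- Let ϑ₀, ϑ₁, ϑ₂, ω₀, ω₁, ω₂ ∈ ℝ. Define R(t) = ϑ₂t² + ϑ₁t + ϑ₀ and S(t) = −9t⁴ + ω₂t² + ω₁t + ω₀. Let y be three times differentiable on an open interval I ⊆ ℝ with y'(x) ≠ 0, R(y(x)) ≠ 0, and (y'(x))² = 4/R(y(x)) for all x ∈ I. Then for every x ∈ I (writing y = y(x)): −S(y)/R(y) − (1/2)·{y,x}(x) = (1/R(y)²)·[ 2ϑ₂ − (5/4)·(2ϑ₂y + ϑ₁)²/R(y) ] − S(y)/R(y). -/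

import Mathlib

/-- The polynomial `R` of the triconfluent-Heun-class Bose invariant. -/
def tcheunR (ϑ₀ ϑ₁ ϑ₂ : ℝ) : ℝ → ℝ := fun t => ϑ₂ * t ^ 2 + ϑ₁ * t + ϑ₀

/-- The polynomial `S` of the triconfluent-Heun-class Bose invariant. -/
def tcheunS (ω₀ ω₁ ω₂ : ℝ) : ℝ → ℝ := fun t =>
  -9 * t ^ 4 + ω₂ * t ^ 2 + ω₁ * t + ω₀

/-- closed form of the potential of the triconfluent Heun class. -/
theorem stmt_18 (ϑ₀ ϑ₁ ϑ₂ ω₀ ω₁ ω₂ : ℝ)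
    (y : ℝ → ℝ) (I : Set ℝ) (hI : IsOpen I)
    (hy : ∀ x ∈ I, DifferentiableAt ℝ y x)
    (hy' : ∀ x ∈ I, DifferentiableAt ℝ (deriv y) x)
    (hy'' : ∀ x ∈ I, DifferentiableAt ℝ (deriv (deriv y)) x)
    (hy0 : ∀ x ∈ I, deriv y x ≠ 0)
    (hR : ∀ x ∈ I, tcheunR ϑ₀ ϑ₁ ϑ₂ (y x) ≠ 0)
    (heq : ∀ x ∈ I, (deriv y x) ^ 2 = 4 / tcheunR ϑ₀ ϑ₁ ϑ₂ (y x)) :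
    ∀ x ∈ I,
      -(tcheunS ω₀ ω₁ ω₂ (y x)) / tcheunR ϑ₀ ϑ₁ ϑ₂ (y x)
          - (1 / 2) * (deriv (fun t => deriv (deriv y) t / deriv y t) x
              - (1 / 2) * (deriv (deriv y) x / deriv y x) ^ 2)
        = (1 / (tcheunR ϑ₀ ϑ₁ ϑ₂ (y x)) ^ 2) *
            (2 * ϑ₂ - (5 / 4) * (2 * ϑ₂ * y x + ϑ₁) ^ 2 / tcheunR ϑ₀ ϑ₁ ϑ₂ (y x))
          - tcheunS ω₀ ω₁ ω₂ (y x) / tcheunR ϑ₀ ϑ₁ ϑ₂ (y x) := by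
  -- Step A: formula for the second derivative on I
  have key2 : ∀ z ∈ I, deriv (deriv y) z =
      -2 * (2 * ϑ₂ * y z + ϑ₁) / (tcheunR ϑ₀ ϑ₁ ϑ₂ (y z)) ^ 2 := by
    intro z hz
    have hmemz : I ∈ nhds z := hI.mem_nhds hz
    have hyd : HasDerivAt y (deriv y z) z := (hy z hz).hasDerivAt
    have hRd : HasDerivAt (fun t => tcheunR ϑ₀ ϑ₁ ϑ₂ (y t))
        ((2 * ϑ₂ * y z + ϑ₁) * deriv y z) z := by
      have h : HasDerivAt (fun t => ϑ₂ * y t ^ 2 + ϑ₁ * y t + ϑ₀) _ z :=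
        (((hyd.pow 2).const_mul ϑ₂).add (hyd.const_mul ϑ₁)).add_const ϑ₀
      simp only [tcheunR]
      convert h using 1
      push_cast
      ring
    have hrhs := (hasDerivAt_const z (4:ℝ)).div hRd (hR z hz)
    have hlhs : HasDerivAt (fun t => (deriv y t) ^ 2)
        (2 * deriv y z ^ 1 * deriv (deriv y) z) z := (hy' z hz).hasDerivAt.pow 2
    have heq' : (fun t => (deriv y t) ^ 2) =ᶠ[nhds z]
        (fun t => 4 / tcheunR ϑ₀ ϑ₁ ϑ₂ (y t)) :=
      Filter.eventuallyEq_of_mem hmemz heq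
    have E := heq'.deriv_eq
    rw [hlhs.deriv, HasDerivAt.deriv (f := fun t => 4 / tcheunR ϑ₀ ϑ₁ ϑ₂ (y t)) hrhs] at E
    have hv := hy0 z hz
    have hRz := hR z hz
    field_simp at E ⊢
    apply mul_left_cancel₀ hv
    linear_combination E / 2
  intro x hx
  have hmem : I ∈ nhds x := hI.mem_nhds hx
  have hyd : HasDerivAt y (deriv y x) x := (hy x hx).hasDerivAt
  have hv := hy0 x hx
  have hRx := hR x hx
  have hRd : HasDerivAt (fun t => tcheunR ϑ₀ ϑ₁ ϑ₂ (y t))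
      ((2 * ϑ₂ * y x + ϑ₁) * deriv y x) x := by
    have h : HasDerivAt (fun t => ϑ₂ * y t ^ 2 + ϑ₁ * y t + ϑ₀) _ x :=
      (((hyd.pow 2).const_mul ϑ₂).add (hyd.const_mul ϑ₁)).add_const ϑ₀
    simp only [tcheunR]
    convert h using 1
    push_cast
    ring
  -- Step B: third derivative
  have hN : HasDerivAt (fun t => -2 * (2 * ϑ₂ * y t + ϑ₁))
      (-2 * (2 * ϑ₂ * deriv y x)) x := by
    have h := ((hyd.const_mul (2 * ϑ₂)).add_const ϑ₁).const_mul (-2)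
    convert h using 1
  have hD : HasDerivAt (fun t => (tcheunR ϑ₀ ϑ₁ ϑ₂ (y t)) ^ 2)
      (2 * (tcheunR ϑ₀ ϑ₁ ϑ₂ (y x)) ^ 1 * ((2 * ϑ₂ * y x + ϑ₁) * deriv y x)) x :=
    hRd.pow 2
  have hg := hN.div hD (pow_ne_zero 2 hRx)
  have heg : deriv (deriv y) =ᶠ[nhds x]
      (fun t => -2 * (2 * ϑ₂ * y t + ϑ₁) / (tcheunR ϑ₀ ϑ₁ ϑ₂ (y t)) ^ 2) :=
    Filter.eventuallyEq_of_mem hmem key2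
  have h3 : deriv (deriv (deriv y)) x =
      (-2 * (2 * ϑ₂ * deriv y x) * (tcheunR ϑ₀ ϑ₁ ϑ₂ (y x)) ^ 2
        - -2 * (2 * ϑ₂ * y x + ϑ₁) *
          (2 * (tcheunR ϑ₀ ϑ₁ ϑ₂ (y x)) ^ 1 * ((2 * ϑ₂ * y x + ϑ₁) * deriv y x)))
        / ((tcheunR ϑ₀ ϑ₁ ϑ₂ (y x)) ^ 2) ^ 2 := by
    rw [heg.deriv_eq, HasDerivAt.deriv (f := fun t => -2 * (2 * ϑ₂ * y t + ϑ₁) / (tcheunR ϑ₀ ϑ₁ ϑ₂ (y t)) ^ 2) hg]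
  -- Step C: derivative of the quotient
  have hq : deriv (fun t => deriv (deriv y) t / deriv y t) x =
      (deriv (deriv (deriv y)) x * deriv y x
        - deriv (deriv y) x * deriv (deriv y) x) / (deriv y x) ^ 2 :=
    deriv_div (hy'' x hx) (hy' x hx) hv
  have hw := key2 x hx
  have hv2 : (deriv y x) ^ 2 * tcheunR ϑ₀ ϑ₁ ϑ₂ (y x) = 4 := by
    rw [heq x hx]; field_simp
  rw [hq, h3, hw]
  field_simp
  ring_nf
  linear_combination (-3 * (2 * ϑ₂ * y x + ϑ₁) ^ 2) * hv2
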